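/- Let f be continuous, positive, strictly decreasing on [0,∞) with ∫₀^∞ f = 1, F(s) = ∫_s^∞ f, and √(μ(M)) = (√2/2) ∫₀^M (F(s) − F(M))^{−1/2} ds. Define g(M) = f(M)√(μ(M))/F(M). For f(s) = b(1+s)^{−1−b} with b > 0, one has liminf_{M→∞} μ(M) f(M)/M > 0. -/

import Mathlib

open MeasureTheory Set Filter Topology

lemma myHasDeriv (b : ℝ) (x : ℝ) (hx : 0 < 1 + x) :
    HasDerivAt (fun t : ℝ => -(1 + t) ^ (-b : ℝ)) (b * (1 + x) ^ (-1 - b : ℝ)) x := by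
  have h1 : HasDerivAt (fun t : ℝ => 1 + t) 1 x := (hasDerivAt_id x).const_add 1
  have h2 := (h1.rpow_const (p := -b) (Or.inl hx.ne')).neg
  have : b * (1 + x) ^ (-1 - b : ℝ) = -(1 * -b * (1 + x) ^ (-b - 1 : ℝ)) := by
    rw [show (-1 - b : ℝ) = -b - 1 by ring]; ring
  exact this ▸ h2

lemma myF (b : ℝ) (hb : 0 < b) (s : ℝ) (hs : -1 < s) :
    ∫ σ in Ioi s, b * (1 + σ) ^ (-1 - b : ℝ) = (1 + s) ^ (-b : ℝ) := by
  have hderiv : ∀ x ∈ Ici s, HasDerivAt (fun t : ℝ => -(1 + t) ^ (-b : ℝ))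
      (b * (1 + x) ^ (-1 - b : ℝ)) x := fun x hx => myHasDeriv b x (by have := hs.trans_le hx; linarith)
  have htend : Tendsto (fun t : ℝ => -(1 + t) ^ (-b : ℝ)) atTop (𝓝 0) := by
    rw [show (0:ℝ) = -0 by ring]
    exact ((tendsto_rpow_neg_atTop hb).comp (tendsto_atTop_add_const_left atTop 1 tendsto_id)).neg
  have hint : IntegrableOn (fun x => b * (1 + x) ^ (-1 - b : ℝ)) (Ioi s) :=
    integrableOn_Ioi_deriv_of_nonneg' hderiv
      (fun x hx => mul_nonneg hb.le (Real.rpow_nonneg (by have := hs.trans hx; linarith) _)) htend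
  rw [integral_Ioi_of_hasDerivAt_of_tendsto' hderiv hint htend]
  ring

lemma mySub (b : ℝ) (hb : 0 < b) {M s : ℝ} (hs : 0 ≤ s) (hsM : s ≤ M) :
    b * (1 + M) ^ (-1 - b : ℝ) * (M - s) ≤ (1 + s) ^ (-b : ℝ) - (1 + M) ^ (-b : ℝ) := by
  have hderiv : ∀ t ∈ uIcc s M, HasDerivAt (fun t : ℝ => -(1 + t) ^ (-b : ℝ))
      (b * (1 + t) ^ (-1 - b : ℝ)) t := by
    intro t ht
    rw [uIcc_of_le hsM] at ht
    exact myHasDeriv b t (by have := ht.1; linarith)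
  have hcont : IntervalIntegrable (fun t : ℝ => b * (1 + t) ^ (-1 - b : ℝ)) volume s M := by
    apply ContinuousOn.intervalIntegrable
    apply ContinuousOn.mul continuousOn_const
    apply ContinuousOn.rpow_const ((continuous_const.add continuous_id).continuousOn)
    intro t ht
    rw [uIcc_of_le hsM] at ht
    refine Or.inl (ne_of_gt ?_)
    have := ht.1; show (0:ℝ) < 1 + t; linarith
  have heq := intervalIntegral.integral_eq_sub_of_hasDerivAt hderiv hcont
  have hmono := intervalIntegral.integral_mono_on hsM (intervalIntegrable_const
      (c := b * (1 + M) ^ (-1 - b : ℝ))) hcont (fun t ht => by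
    have h1 : (0:ℝ) < 1 + t := by have := ht.1; show (0:ℝ) < 1 + t; linarith
    have h2 : (1 + t : ℝ) ≤ 1 + M := by have := ht.2; linarith
    exact mul_le_mul_of_nonneg_left
      (Real.rpow_le_rpow_of_nonpos h1 h2 (by linarith)) hb.le)
  rw [intervalIntegral.integral_const, heq] at hmono
  simp only [smul_eq_mul] at hmono
  nlinarith [hmono]
theorem stmt_19 (b : ℝ) (hb : 0 < b)
    (f F μ : ℝ → ℝ)
    (hf : ∀ s, 0 ≤ s → f s = b * (1 + s) ^ (-1 - b : ℝ))
    (hF : ∀ s, F s = ∫ σ in Ioi s, f σ)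
    (hμnonneg : ∀ M, 0 < M → 0 ≤ μ M)
    (hμ : ∀ M, 0 < M →
      Real.sqrt (μ M) = (Real.sqrt 2 / 2) * ∫ s in (0:ℝ)..M, (F s - F M) ^ (-(1/2) : ℝ)) :
    0 < Filter.atTop.liminf fun M => μ M * f M / M := by
  set q : ℝ := b / 2 + 1 with hqdef
  have hq1 : 1 ≤ q := by rw [hqdef]; linarith
  have hq0 : 0 < q := by linarith
  set c : ℝ := b / (8 * q ^ 2) with hcdef
  have hc : 0 < c := by rw [hcdef]; positivity
  have key : ∀ M : ℝ, 1 ≤ M → c ≤ μ M * f M / M ∧ μ M * f M / M ≤ 2 := by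
    intro M hM
    have hM0 : (0:ℝ) < M := by linarith
    have hM1 : (0:ℝ) < 1 + M := by linarith
    set K : ℝ := b * (1 + M) ^ (-1 - b : ℝ) with hKdef
    have hK : 0 < K := by
      rw [hKdef]; exact mul_pos hb (Real.rpow_pos_of_pos hM1 _)
    have hfM : f M = K := hf M hM0.le
    have hFeq : ∀ s, 0 ≤ s → F s = (1 + s) ^ (-b : ℝ) := by
      intro s hs
      rw [hF s, setIntegral_congr_fun measurableSet_Ioi
        (fun σ hσ => hf σ (hs.trans (le_of_lt hσ)))]
      exact myF b hb s (by linarith)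
    set h : ℝ → ℝ := fun s => (F s - F M) ^ (-(1/2) : ℝ) with hhdef
    set Iv : ℝ := ∫ s in (0:ℝ)..M, h s with hIdef
    have hsub' : ∀ s ∈ Icc (0:ℝ) M, K * (M - s) ≤ F s - F M := by
      intro s hs
      rw [hFeq s hs.1, hFeq M hM0.le, hKdef]
      have := mySub b hb hs.1 hs.2
      nlinarith [this]
    have hhub : ∀ s ∈ Icc (0:ℝ) M,
        h s ≤ K ^ (-(1/2):ℝ) * (M - s) ^ (-(1/2):ℝ) := by
      intro s hs
      rcases eq_or_lt_of_le hs.2 with rfl | hlt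
      · simp [hhdef, Real.zero_rpow (by norm_num : (-(1/2):ℝ) ≠ 0)]
      · have hpos : (0:ℝ) < K * (M - s) := mul_pos hK (by linarith)
        calc h s ≤ (K * (M - s)) ^ (-(1/2):ℝ) :=
              Real.rpow_le_rpow_of_nonpos hpos (hsub' s hs) (by norm_num)
          _ = K ^ (-(1/2):ℝ) * (M - s) ^ (-(1/2):ℝ) :=
              Real.mul_rpow hK.le (by linarith)
    have hh0 : ∀ s ∈ Icc (0:ℝ) M, 0 ≤ h s := by
      intro s hs
      exact Real.rpow_nonneg (le_trans (by nlinarith [hs.1, hs.2, hK.le] : (0:ℝ) ≤ K * (M - s)) (hsub' s hs)) _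
    have hmeas : AEStronglyMeasurable h (volume.restrict (Set.uIoc (0:ℝ) M)) := by
      have hm : Measurable fun s : ℝ => ((1+s)^(-b:ℝ) - (1+M)^(-b:ℝ)) ^ (-(1/2):ℝ) := by
        fun_prop
      refine hm.aestronglyMeasurable.congr ?_
      filter_upwards [ae_restrict_mem measurableSet_uIoc] with s hs
      rw [uIoc_of_le hM0.le] at hs
      rw [hhdef]
      simp only
      rw [hFeq s hs.1.le, hFeq M hM0.le]
    have hint_ub : IntervalIntegrable
        (fun s => K ^ (-(1/2):ℝ) * (M - s) ^ (-(1/2):ℝ)) volume 0 M := by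
      have h1 : IntervalIntegrable (fun x : ℝ => x ^ (-(1/2):ℝ)) volume 0 M :=
        intervalIntegral.intervalIntegrable_rpow' (by norm_num)
      have h2 := (h1.comp_sub_left M).symm
      simp only [sub_zero, sub_self] at h2
      exact h2.const_mul _
    have hIint : IntervalIntegrable h volume 0 M := by
      refine hint_ub.mono_fun hmeas ?_
      filter_upwards [ae_restrict_mem measurableSet_uIoc] with s hs
      rw [uIoc_of_le hM0.le] at hs
      have hs' : s ∈ Icc (0:ℝ) M := ⟨hs.1.le, hs.2⟩
      rw [Real.norm_eq_abs, Real.norm_eq_abs, abs_of_nonneg (hh0 s hs'),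
        abs_of_nonneg (mul_nonneg (Real.rpow_nonneg hK.le _)
          (Real.rpow_nonneg (by linarith [hs.2] : (0:ℝ) ≤ M - s) _))]
      exact hhub s hs'
    have hglow : IntervalIntegrable (fun s : ℝ => (1+s)^(b/2:ℝ)) volume 0 M := by
      apply ContinuousOn.intervalIntegrable
      apply ContinuousOn.rpow_const ((continuous_const.add continuous_id).continuousOn)
      intro t ht
      rw [uIcc_of_le hM0.le] at ht
      refine Or.inl (ne_of_gt ?_)
      have := ht.1; show (0:ℝ) < 1 + t; linarith
    have hne : ∀ᵐ s : ℝ ∂(volume.restrict (Icc (0:ℝ) M)), s ≠ M := by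
      refine (ae_restrict_iff' measurableSet_Icc).mpr ?_
      have : ∀ᵐ s : ℝ, s ≠ M := by
        rw [ae_iff]
        have : {s : ℝ | ¬ s ≠ M} = {M} := by ext x; simp
        rw [this]
        exact Real.volume_singleton
      filter_upwards [this] with s hs _ using hs
    have hlow : (∫ s in (0:ℝ)..M, (1+s)^(b/2:ℝ)) ≤ Iv := by
      rw [hIdef]
      refine intervalIntegral.integral_mono_ae_restrict hM0.le hglow hIint ?_
      filter_upwards [ae_restrict_mem measurableSet_Icc, hne] with s hs hsne
      have hlt : s < M := lt_of_le_of_ne hs.2 hsne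
      have hpos : (0:ℝ) < F s - F M :=
        lt_of_lt_of_le (mul_pos hK (by linarith)) (hsub' s hs)
      have hub2 : F s - F M ≤ (1+s)^(-b:ℝ) := by
        rw [hFeq s hs.1, hFeq M hM0.le]
        have : (0:ℝ) < (1+M)^(-b:ℝ) := Real.rpow_pos_of_pos hM1 _
        linarith
      have heq2 : ((1+s:ℝ)^(-b:ℝ))^(-(1/2):ℝ) = (1+s)^(b/2:ℝ) := by
        rw [← Real.rpow_mul (by linarith [hs.1] : (0:ℝ) ≤ 1+s),
          show ((-b)*(-(1/2)) : ℝ) = b/2 by ring]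
      calc (1+s:ℝ)^(b/2:ℝ) = ((1+s:ℝ)^(-b:ℝ))^(-(1/2):ℝ) := heq2.symm
        _ ≤ (F s - F M) ^ (-(1/2):ℝ) :=
            Real.rpow_le_rpow_of_nonpos hpos hub2 (by norm_num)
    have hlowval : (∫ s in (0:ℝ)..M, (1+s)^(b/2:ℝ)) = ((1+M)^q - 1)/q := by
      have h1 := intervalIntegral.integral_comp_add_left
        (f := fun x : ℝ => x ^ (b/2 : ℝ)) (a := (0:ℝ)) (b := M) 1
      simp only [add_zero] at h1
      rw [h1, integral_rpow (Or.inl (by linarith : (-1:ℝ) < b/2))]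
      rw [Real.one_rpow, hqdef]
    have h2q : (2:ℝ) ≤ (1+M)^q := by
      calc (2:ℝ) ≤ 1 + M := by linarith
        _ = (1+M)^(1:ℝ) := (Real.rpow_one _).symm
        _ ≤ (1+M)^q := Real.rpow_le_rpow_of_exponent_le (by linarith) hq1
    have hIlow : (1+M)^q / (2*q) ≤ Iv := by
      refine le_trans ?_ (le_trans (le_of_eq hlowval.symm) hlow)
      rw [div_le_div_iff₀ (by positivity) hq0]
      nlinarith [h2q]
    have hIpos : 0 ≤ Iv := le_trans (by positivity) hIlow
    have hμval : μ M = Iv^2 / 2 := by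
      have h1 := hμ M hM0
      have h4 : Real.sqrt 2 ^ 2 = 2 := Real.sq_sqrt (by norm_num)
      calc μ M = Real.sqrt (μ M) ^ 2 := (Real.sq_sqrt (hμnonneg M hM0)).symm
        _ = (Real.sqrt 2 / 2 * Iv)^2 := by rw [h1]
        _ = Iv^2/2 := by rw [mul_pow, div_pow, h4]; ring
    constructor
    · -- lower bound
      rw [hfM]
      have hμlow : ((1+M)^q/(2*q))^2 ≤ Iv^2 := pow_le_pow_left₀ (by positivity) hIlow 2
      have hq2 : ((1+M)^q)^2 = (1+M)^((b:ℝ)+2) := by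
        rw [sq, ← Real.rpow_add hM1]; congr 1; rw [hqdef]; ring
      have hBK : (1+M)^((b:ℝ)+2) * K = b * (1+M) := by
        rw [hKdef, mul_comm b, ← mul_assoc, ← Real.rpow_add hM1,
          show (b+2+(-1-b):ℝ) = 1 by ring, Real.rpow_one]
        ring
      have hμMlow : (1+M)^((b:ℝ)+2)/(8*q^2) ≤ μ M := by
        rw [hμval]
        have he : ((1+M)^q/(2*q))^2 = (1+M)^((b:ℝ)+2)/(4*q^2) := by
          rw [div_pow, hq2]; ring
        rw [he] at hμlow
        have hqq : (1+M)^((b:ℝ)+2)/(8*q^2) = ((1+M)^((b:ℝ)+2)/(4*q^2))/2 := by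
          rw [div_div, show (4*q^2*2 : ℝ) = 8*q^2 by ring]
        rw [hqq]
        linarith [hμlow]
      have hstep : c * M ≤ μ M * K := by
        have h5 : (1+M)^((b:ℝ)+2)/(8*q^2) * K ≤ μ M * K :=
          mul_le_mul_of_nonneg_right hμMlow hK.le
        have h6 : (1+M)^((b:ℝ)+2)/(8*q^2) * K = b*(1+M)/(8*q^2) := by
          rw [div_mul_eq_mul_div, hBK]
        rw [h6] at h5
        refine le_trans ?_ h5
        rw [hcdef, div_mul_eq_mul_div]
        gcongr
        linarith
      exact (le_div_iff₀ hM0).mpr hstep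
    · -- upper bound
      rw [hfM]
      have h9 : (∫ s in (0:ℝ)..M, (M-s)^(-(1/2):ℝ)) = ∫ x in (0:ℝ)..M, x^(-(1/2):ℝ) := by
        have := intervalIntegral.integral_comp_sub_left (a:=(0:ℝ)) (b:=M)
          (fun x : ℝ => x ^ (-(1/2):ℝ)) M
        simpa using this
      have h10 : (∫ x in (0:ℝ)..M, x^(-(1/2):ℝ)) = 2 * M^((1:ℝ)/2) := by
        rw [integral_rpow (Or.inl (by norm_num : (-1:ℝ) < -(1/2))),
          show (-(1/2)+1 : ℝ) = 1/2 by norm_num,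
          Real.zero_rpow (by norm_num : ((1:ℝ)/2) ≠ 0)]
        ring
      have hIub : Iv ≤ K ^ (-(1/2):ℝ) * (2 * M^((1:ℝ)/2)) := by
        have h7 : Iv ≤ ∫ s in (0:ℝ)..M, K ^ (-(1/2):ℝ) * (M-s)^(-(1/2):ℝ) :=
          intervalIntegral.integral_mono_on hM0.le hIint hint_ub hhub
        rwa [intervalIntegral.integral_const_mul, h9, h10] at h7
      have hM2 : (M^((1:ℝ)/2))^2 = M := by
        rw [sq, ← Real.rpow_add hM0, show ((1:ℝ)/2 + 1/2) = 1 by norm_num, Real.rpow_one]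
      have hKe : (K^(-(1/2):ℝ))^2 = K⁻¹ := by
        rw [sq, ← Real.rpow_add hK, show (-(1/2) + -(1/2) : ℝ) = -1 by norm_num,
          Real.rpow_neg_one]
      have hUB2 : (K ^ (-(1/2):ℝ) * (2*M^((1:ℝ)/2)))^2 = K⁻¹ * (4*M) := by
        rw [mul_pow, mul_pow, hM2, hKe]; ring
      have hI2 : Iv^2 ≤ K⁻¹ * (4*M) := by
        rw [← hUB2]
        exact pow_le_pow_left₀ hIpos hIub 2
      rw [hμval, div_le_iff₀ hM0]
      have h11 : Iv^2 * K ≤ 4 * M := by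
        have h12 := mul_le_mul_of_nonneg_right hI2 hK.le
        have h13 : K⁻¹ * (4*M) * K = 4*M := by field_simp
        linarith [h12, h13.le]
      nlinarith [h11, hK]
  refine lt_of_lt_of_le hc (Filter.le_liminf_of_le ?_ ?_)
  · refine Filter.IsBoundedUnder.isCoboundedUnder_ge ⟨2, ?_⟩
    rw [Filter.eventually_map]
    filter_upwards [eventually_ge_atTop 1] with M hM using (key M hM).2
  · filter_upwards [eventually_ge_atTop 1] with M hM using (key M hM).1
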